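/- Fix M > 0, a real random variable ρ with P(ρ ∈ [0, M]) = 1 and P(ρ > 0) > 0, and λ > 0 with λ·E(ρ²) > 1; let θ be the unique positive solution of E(λρ²/(1 + λρθ)) = 1. For m ≥ 1 set ρ̂_m = max(ρ, 1/m). Then λ·E(ρ̂_m²) > 1 for every m, and, letting θ̂_m denote the unique positive solution of E(λρ̂_m²/(1 + λρ̂_m θ̂_m)) = 1, one has lim_{m→∞} θ̂_m = θ. -/
import Mathlib


open MeasureTheory Filter Set

section Aux

variable {μ : Measure ℝ} [IsProbabilityMeasure μ] {lam M : ℝ}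

private lemma aux_integrable (hlam : 0 < lam) {h : ℝ → ℝ} (hm : Measurable h) {B : ℝ}
    (hB : ∀ᵐ x ∂μ, 0 ≤ h x ∧ h x ≤ B) {t : ℝ} (ht : 0 ≤ t) :
    Integrable (fun x => lam * (h x) ^ 2 / (1 + lam * h x * t)) μ := by
  apply Integrable.mono' (integrable_const (lam * B ^ 2))
  · exact ((measurable_const.mul (hm.pow_const 2)).div
      (measurable_const.add ((measurable_const.mul hm).mul measurable_const))).aestronglyMeasurable
  · filter_upwards [hB] with x hx
    obtain ⟨h0, hBx⟩ := hx
    have hden : (1 : ℝ) ≤ 1 + lam * h x * t := le_add_of_nonneg_right (by positivity)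
    have hnn : 0 ≤ lam * h x ^ 2 / (1 + lam * h x * t) :=
      div_nonneg (by positivity) (by linarith)
    rw [Real.norm_eq_abs, abs_of_nonneg hnn]
    calc lam * h x ^ 2 / (1 + lam * h x * t) ≤ lam * h x ^ 2 / 1 :=
          div_le_div_of_nonneg_left (by positivity) one_pos hden
      _ = lam * h x ^ 2 := by ring
      _ ≤ lam * B ^ 2 := by
          have : h x ^ 2 ≤ B ^ 2 := pow_le_pow_left₀ h0 hBx 2
          nlinarith

private lemma aux_integrable_sq {h : ℝ → ℝ} (hm : Measurable h) {B : ℝ}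
    (hB : ∀ᵐ x ∂μ, 0 ≤ h x ∧ h x ≤ B) :
    Integrable (fun x => (h x) ^ 2) μ := by
  apply Integrable.mono' (integrable_const (B ^ 2))
  · exact (hm.pow_const 2).aestronglyMeasurable
  · filter_upwards [hB] with x hx
    obtain ⟨h0, hBx⟩ := hx
    rw [Real.norm_eq_abs, abs_of_nonneg (by positivity)]
    exact pow_le_pow_left₀ h0 hBx 2

private lemma aux_mono (hlam : 0 < lam) {h : ℝ → ℝ} (hm : Measurable h) {B : ℝ}
    (hB : ∀ᵐ x ∂μ, 0 ≤ h x ∧ h x ≤ B) {t₁ t₂ : ℝ} (ht₁ : 0 ≤ t₁) (h12 : t₁ ≤ t₂) :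
    ∫ x, lam * (h x) ^ 2 / (1 + lam * h x * t₂) ∂μ ≤
      ∫ x, lam * (h x) ^ 2 / (1 + lam * h x * t₁) ∂μ := by
  apply integral_mono_ae (aux_integrable hlam hm hB (le_trans ht₁ h12))
    (aux_integrable hlam hm hB ht₁)
  filter_upwards [hB] with x hx
  obtain ⟨h0, _⟩ := hx
  apply div_le_div_of_nonneg_left (by positivity)
  · have : 0 ≤ lam * h x * t₁ := by positivity
    linarith
  · have : lam * h x * t₁ ≤ lam * h x * t₂ := by
      apply mul_le_mul_of_nonneg_left h12 (by positivity)
    linarith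

private lemma aux_strict (hM : 0 < M) (hμM : μ (Set.Icc (0 : ℝ) M) = 1)
    (hμpos : 0 < μ (Set.Ioi (0 : ℝ))) (hlam : 0 < lam)
    {t₁ t₂ : ℝ} (ht₁ : 0 ≤ t₁) (h12 : t₁ < t₂) :
    ∫ x, lam * x ^ 2 / (1 + lam * x * t₂) ∂μ <
      ∫ x, lam * x ^ 2 / (1 + lam * x * t₁) ∂μ := by
  have hcompl : μ (Set.Icc (0 : ℝ) M)ᶜ = 0 := by
    rw [measure_compl measurableSet_Icc (measure_ne_top μ _), hμM]
    simp
  have hae : ∀ᵐ x ∂μ, x ∈ Set.Icc (0 : ℝ) M := by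
    rw [MeasureTheory.ae_iff]
    exact hcompl
  have hBid : ∀ᵐ x ∂μ, 0 ≤ x ∧ x ≤ M := by
    filter_upwards [hae] with x hx; exact ⟨hx.1, hx.2⟩
  have hi2 := aux_integrable (μ := μ) hlam measurable_id' hBid (le_trans ht₁ h12.le)
  have hi1 := aux_integrable (μ := μ) hlam measurable_id' hBid ht₁
  have key : 0 < ∫ x, (lam * x ^ 2 / (1 + lam * x * t₁) -
      lam * x ^ 2 / (1 + lam * x * t₂)) ∂μ := by
    rw [integral_pos_iff_support_of_nonneg_ae]
    · apply lt_of_lt_of_le hμpos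
      rw [← measure_inter_conull hcompl]
      apply measure_mono
      rintro x ⟨hx0, hx0M⟩
      have hx : (0 : ℝ) < x := hx0
      have hb1 : (0 : ℝ) < 1 + lam * x * t₁ := by
        have := mul_nonneg (mul_nonneg hlam.le hx.le) ht₁
        linarith
      have hlt : 1 + lam * x * t₁ < 1 + lam * x * t₂ := by
        have := mul_lt_mul_of_pos_left h12 (mul_pos hlam hx)
        linarith
      have : lam * x ^ 2 / (1 + lam * x * t₂) < lam * x ^ 2 / (1 + lam * x * t₁) :=
        div_lt_div_of_pos_left (by positivity) hb1 hlt
      simp only [Function.mem_support]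
      intro hcontra
      rw [sub_eq_zero] at hcontra
      exact absurd hcontra (ne_of_gt this)
    · filter_upwards [hBid] with x hx
      obtain ⟨h0, _⟩ := hx
      have hb1 : (0 : ℝ) < 1 + lam * x * t₁ := by
        have := mul_nonneg (mul_nonneg hlam.le h0) ht₁
        linarith
      have hle : 1 + lam * x * t₁ ≤ 1 + lam * x * t₂ := by
        have := mul_le_mul_of_nonneg_left h12.le (mul_nonneg hlam.le h0)
        linarith
      exact sub_nonneg.mpr (div_le_div_of_nonneg_left (by positivity) hb1 hle)
    · exact hi1.sub hi2
  rw [integral_sub hi1 hi2] at key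
  linarith

private lemma aux_tendsto (hM : 0 < M) (hμM : μ (Set.Icc (0 : ℝ) M) = 1)
    (hlam : 0 < lam) {t : ℝ} (ht : 0 ≤ t) :
    Tendsto (fun m : ℕ => ∫ x, lam * (max x (1 / (m : ℝ))) ^ 2 /
        (1 + lam * (max x (1 / (m : ℝ))) * t) ∂μ) atTop
      (nhds (∫ x, lam * x ^ 2 / (1 + lam * x * t) ∂μ)) := by
  have hcompl : μ (Set.Icc (0 : ℝ) M)ᶜ = 0 := by
    rw [measure_compl measurableSet_Icc (measure_ne_top μ _), hμM]
    simp
  have hae : ∀ᵐ x ∂μ, x ∈ Set.Icc (0 : ℝ) M := by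
    rw [MeasureTheory.ae_iff]; exact hcompl
  have hinv : ∀ m : ℕ, (1 : ℝ) / (m : ℝ) ≤ 1 := by
    intro m
    rcases Nat.eq_zero_or_pos m with h | h
    · simp [h]
    · rw [div_le_one (by exact_mod_cast h)]
      exact_mod_cast h
  apply tendsto_integral_of_dominated_convergence (fun _ => lam * (max M 1) ^ 2)
  · intro n
    exact ((measurable_const.mul ((measurable_id.max measurable_const).pow_const 2)).div
      (measurable_const.add ((measurable_const.mul
        (measurable_id.max measurable_const)).mul measurable_const))).aestronglyMeasurable
  · exact integrable_const _
  · intro n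
    filter_upwards [hae] with x hx
    obtain ⟨h0, hxM⟩ := hx
    set y := max x (1 / (n : ℝ)) with hy
    have hy0 : 0 ≤ y := le_trans h0 (le_max_left _ _)
    have hyB : y ≤ max M 1 := max_le (le_trans hxM (le_max_left _ _))
      (le_trans (hinv n) (le_max_right _ _))
    have hden : (1 : ℝ) ≤ 1 + lam * y * t := le_add_of_nonneg_right (by positivity)
    have hnn : 0 ≤ lam * y ^ 2 / (1 + lam * y * t) := div_nonneg (by positivity) (by linarith)
    rw [Real.norm_eq_abs, abs_of_nonneg hnn]
    calc lam * y ^ 2 / (1 + lam * y * t) ≤ lam * y ^ 2 / 1 :=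
          div_le_div_of_nonneg_left (by positivity) one_pos hden
      _ = lam * y ^ 2 := by ring
      _ ≤ lam * (max M 1) ^ 2 := by
          have : y ^ 2 ≤ (max M 1) ^ 2 := pow_le_pow_left₀ hy0 hyB 2
          nlinarith
  · filter_upwards [hae] with x hx
    obtain ⟨h0, _⟩ := hx
    have h1 : Tendsto (fun m : ℕ => max x (1 / (m : ℝ))) atTop (nhds x) := by
      have := (tendsto_const_nhds (x := x) (f := atTop (α := ℕ))).max
        tendsto_one_div_atTop_nhds_zero_nat
      simpa [max_eq_left h0] using this
    have hden : (1 : ℝ) + lam * x * t ≠ 0 := by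
      have : 0 ≤ lam * x * t := by positivity
      linarith
    have hc1 : ContinuousAt (fun y : ℝ => lam * y ^ 2) x := by fun_prop
    have hc2 : ContinuousAt (fun y : ℝ => 1 + lam * y * t) x := by fun_prop
    exact ((hc1.div hc2 hden).tendsto).comp h1

end Aux

/-- Fix `M > 0`, a real random variable `ρ` (with law `μ`) with
`P(ρ ∈ [0, M]) = 1` and `P(ρ > 0) > 0`, and `λ > 0` with `λ·E(ρ²) > 1`; let `θ` be the unique
positive solution of `E(λρ²/(1 + λρθ)) = 1`.  For `m ≥ 1` set `ρ̂_m = max(ρ, 1/m)` (so that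
`E g(ρ̂_m) = ∫ g(max(x, 1/m)) dμ(x)`).  Then `λ·E(ρ̂_m²) > 1` for every `m ≥ 1`, and,
letting `θ̂_m` denote the unique positive solution of `E(λρ̂_m²/(1 + λρ̂_m θ̂_m)) = 1`,
one has `θ̂_m → θ` as `m → ∞`. -/
theorem theta_truncation_above_limit (M : ℝ) (hM : 0 < M)
    (μ : Measure ℝ) [IsProbabilityMeasure μ]
    (hμM : μ (Set.Icc (0 : ℝ) M) = 1) (hμpos : 0 < μ (Set.Ioi (0 : ℝ)))
    (lam : ℝ) (hlam : 0 < lam) (hsup : 1 < lam * ∫ x, x ^ 2 ∂μ)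
    (θ : ℝ) (hθpos : 0 < θ) (hθ : ∫ x, lam * x ^ 2 / (1 + lam * x * θ) ∂μ = 1) :
    (∀ m : ℕ, 1 ≤ m → 1 < lam * ∫ x, (max x (1 / (m : ℝ))) ^ 2 ∂μ) ∧
      ∀ θm : ℕ → ℝ,
        (∀ m : ℕ, 1 ≤ m → 0 < θm m ∧
            ∫ x, lam * (max x (1 / (m : ℝ))) ^ 2 /
              (1 + lam * (max x (1 / (m : ℝ))) * θm m) ∂μ = 1) →
          Tendsto θm atTop (nhds θ) := by
  have hcompl : μ (Set.Icc (0 : ℝ) M)ᶜ = 0 := by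
    rw [measure_compl measurableSet_Icc (measure_ne_top μ _), hμM]
    simp
  have hae : ∀ᵐ x ∂μ, x ∈ Set.Icc (0 : ℝ) M := by
    rw [MeasureTheory.ae_iff]; exact hcompl
  have hBid : ∀ᵐ x ∂μ, 0 ≤ x ∧ x ≤ M := by
    filter_upwards [hae] with x hx; exact ⟨hx.1, hx.2⟩
  have hinv : ∀ m : ℕ, (1 : ℝ) / (m : ℝ) ≤ 1 := by
    intro m
    rcases Nat.eq_zero_or_pos m with h | h
    · simp [h]
    · rw [div_le_one (by exact_mod_cast h)]
      exact_mod_cast h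
  have hBmax : ∀ m : ℕ, ∀ᵐ x ∂μ, 0 ≤ max x (1 / (m : ℝ)) ∧ max x (1 / (m : ℝ)) ≤ max M 1 := by
    intro m
    filter_upwards [hae] with x hx
    exact ⟨le_trans hx.1 (le_max_left _ _),
      max_le (le_trans hx.2 (le_max_left _ _)) (le_trans (hinv m) (le_max_right _ _))⟩
  have hmmax : ∀ m : ℕ, Measurable (fun x : ℝ => max x (1 / (m : ℝ))) := fun m =>
    measurable_id.max measurable_const
  constructor
  · intro m _
    have hle : ∫ x, x ^ 2 ∂μ ≤ ∫ x, (max x (1 / (m : ℝ))) ^ 2 ∂μ := by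
      apply integral_mono_ae (aux_integrable_sq measurable_id' hBid)
        (aux_integrable_sq (hmmax m) (hBmax m))
      filter_upwards [hae] with x hx
      exact pow_le_pow_left₀ hx.1 (le_max_left _ _) 2
    calc (1 : ℝ) < lam * ∫ x, x ^ 2 ∂μ := hsup
      _ ≤ lam * ∫ x, (max x (1 / (m : ℝ))) ^ 2 ∂μ :=
          mul_le_mul_of_nonneg_left hle hlam.le
  · intro θm hθm
    rw [Metric.tendsto_atTop]
    intro ε hε
    set ε' := min (ε / 2) (θ / 2) with hε'def
    have hε'pos : 0 < ε' := lt_min (by linarith) (by linarith)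
    have hε'θ : ε' ≤ θ / 2 := min_le_right _ _
    have hε'ε : ε' < ε := lt_of_le_of_lt (min_le_left _ _) (by linarith)
    have hθε'pos : 0 < θ - ε' := by linarith
    have hlt : ∫ x, lam * x ^ 2 / (1 + lam * x * (θ + ε')) ∂μ < 1 := by
      have h := aux_strict hM hμM hμpos hlam (t₁ := θ) (t₂ := θ + ε') hθpos.le (by linarith)
      rwa [hθ] at h
    have hgt : 1 < ∫ x, lam * x ^ 2 / (1 + lam * x * (θ - ε')) ∂μ := by
      have h := aux_strict hM hμM hμpos hlam (t₁ := θ - ε') (t₂ := θ) hθε'pos.le (by linarith)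
      rwa [hθ] at h
    have hA : ∀ᶠ m : ℕ in atTop,
        ∫ x, lam * (max x (1 / (m : ℝ))) ^ 2 /
          (1 + lam * (max x (1 / (m : ℝ))) * (θ + ε')) ∂μ < 1 :=
      (aux_tendsto hM hμM hlam (by linarith : (0:ℝ) ≤ θ + ε')).eventually_lt_const hlt
    have hB : ∀ᶠ m : ℕ in atTop,
        1 < ∫ x, lam * (max x (1 / (m : ℝ))) ^ 2 /
          (1 + lam * (max x (1 / (m : ℝ))) * (θ - ε')) ∂μ :=
      (aux_tendsto hM hμM hlam hθε'pos.le).eventually_const_lt hgt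
    rw [eventually_atTop] at hA hB
    obtain ⟨N₁, hN₁⟩ := hA
    obtain ⟨N₂, hN₂⟩ := hB
    refine ⟨max (max N₁ N₂) 1, fun m hm => ?_⟩
    have hm1 : 1 ≤ m := le_trans (le_max_right _ _) hm
    have hmN₁ : N₁ ≤ m := le_trans (le_trans (le_max_left _ _) (le_max_left _ _)) hm
    have hmN₂ : N₂ ≤ m := le_trans (le_trans (le_max_right _ _) (le_max_left _ _)) hm
    obtain ⟨hpos_m, heq⟩ := hθm m hm1
    have hub : θm m < θ + ε' := by
      by_contra hcon
      push_neg at hcon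
      have := aux_mono hlam (hmmax m) (hBmax m) (by linarith : (0:ℝ) ≤ θ + ε') hcon
      rw [heq] at this
      linarith [hN₁ m hmN₁]
    have hlb : θ - ε' < θm m := by
      by_contra hcon
      push_neg at hcon
      have := aux_mono hlam (hmmax m) (hBmax m) hpos_m.le hcon
      rw [heq] at this
      linarith [hN₂ m hmN₂]
    rw [Real.dist_eq, abs_lt]
    constructor <;> linarith
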